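/- (Calibration conditions in conditional and unconditional form are equivalent.) Let Ω be a finite set, 𝒫 a nonempty set of probability measures on Ω, B ⊆ Ω with inf_{P∈𝒫} P(B) > 0, and f : Ω → ℝ any gamble. Then sup_{P∈𝒫} E_P[1_B·f] = 0 if and only if sup_{P∈𝒫} E_{P(·|B)}[f] = 0. -/
import Mathlib


/-- `P` is a probability measure on the finite set `Ω`. -/
def IsProb {Ω : Type*} [Fintype Ω] (P : Ω → ℝ) : Prop :=
  (∀ ω, 0 ≤ P ω) ∧ ∑ ω, P ω = 1

/-- Expectation of the gamble `Z` under `P`. -/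
noncomputable def expct {Ω : Type*} [Fintype Ω] (P Z : Ω → ℝ) : ℝ :=
  ∑ ω, P ω * Z ω

/-- The probability `P(B)` of the event `B`. -/
noncomputable def probOf {Ω : Type*} [Fintype Ω] (P : Ω → ℝ) (B : Set Ω) : ℝ :=
  ∑ ω, B.indicator P ω

/-- The conditional probability measure `P(· | B)`. -/
noncomputable def condB {Ω : Type*} [Fintype Ω] (P : Ω → ℝ) (B : Set Ω) : Ω → ℝ :=
  fun ω => B.indicator P ω / probOf P B

lemma sup_zero_iff (S : Set ℝ) (hne : S.Nonempty) (hbdd : BddAbove S) :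
    sSup S = 0 ↔ (∀ x ∈ S, x ≤ 0) ∧ ∀ δ > (0:ℝ), ∃ x ∈ S, -δ < x := by
  constructor
  · intro h
    constructor
    · intro x hx
      have := le_csSup hbdd hx
      linarith [this, h.le]
    · intro δ hδ
      by_contra hc
      push_neg at hc
      have : sSup S ≤ -δ := csSup_le hne fun x hx => le_of_not_gt fun hlt => absurd hlt (by
        have := hc x hx; linarith)
      linarith
  · rintro ⟨hle, hge⟩
    have h1 : sSup S ≤ 0 := csSup_le hne hle
    have h2 : 0 ≤ sSup S := by
      by_contra h
      push_neg at h
      obtain ⟨x, hx, hxlt⟩ := hge (-(sSup S)) (by linarith)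
      have := le_csSup hbdd hx
      simp at hxlt
      linarith
    linarith

/-- Key identity: the unconditional expectation equals the conditional one scaled. -/
lemma expct_cond_eq {Ω : Type*} [Fintype Ω] (P : Ω → ℝ) (B : Set Ω) (f : Ω → ℝ) :
    expct (condB P B) f = expct P (B.indicator f) / probOf P B := by
  unfold expct condB
  rw [Finset.sum_div]
  apply Finset.sum_congr rfl
  intro ω _
  rw [div_mul_eq_mul_div]
  congr 1
  by_cases h : ω ∈ B
  · simp [Set.indicator_of_mem h]
  · simp [Set.indicator_of_notMem h]

theorem calibration_conditional_unconditional_equiv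
    {Ω : Type*} [Fintype Ω]
    (Ps : Set (Ω → ℝ)) (hPsne : Ps.Nonempty) (hPs : ∀ P ∈ Ps, IsProb P)
    (B : Set Ω) (hB : 0 < sInf ((fun P => probOf P B) '' Ps))
    (f : Ω → ℝ) :
    sSup ((fun P => expct P (B.indicator f)) '' Ps) = 0
      ↔ sSup ((fun P => expct (condB P B) f) '' Ps) = 0 := by
  set ε := sInf ((fun P => probOf P B) '' Ps) with hε
  -- lower bound on probOf
  have hbb : BddBelow ((fun P => probOf P B) '' Ps) := by
    refine ⟨0, ?_⟩
    rintro _ ⟨P, hP, rfl⟩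
    exact Finset.sum_nonneg fun ω _ => Set.indicator_nonneg (fun ω _ => (hPs P hP).1 ω) ω
  have hεle : ∀ P ∈ Ps, ε ≤ probOf P B := fun P hP => csInf_le hbb ⟨P, hP, rfl⟩
  have hεpos : (0:ℝ) < ε := hB
  -- probOf ≤ 1
  have hPle1 : ∀ P ∈ Ps, probOf P B ≤ 1 := by
    intro P hP
    have : probOf P B ≤ ∑ ω, P ω := by
      apply Finset.sum_le_sum
      intro ω _
      exact Set.indicator_le_self' (fun ω _ => (hPs P hP).1 ω) ω
    rw [(hPs P hP).2] at this
    exact this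
  -- pointwise mass bound P ω ≤ 1
  have hPω : ∀ P ∈ Ps, ∀ ω, P ω ≤ 1 := by
    intro P hP ω
    have := Finset.single_le_sum (f := P) (fun i _ => (hPs P hP).1 i) (Finset.mem_univ ω)
    rw [(hPs P hP).2] at this
    exact this
  set K : ℝ := ∑ ω, |B.indicator f ω| with hK
  have hK0 : 0 ≤ K := Finset.sum_nonneg fun ω _ => abs_nonneg _
  have haK : ∀ P ∈ Ps, expct P (B.indicator f) ≤ K := by
    intro P hP
    apply Finset.sum_le_sum
    intro ω _
    calc P ω * B.indicator f ω ≤ |P ω * B.indicator f ω| := le_abs_self _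
      _ = |P ω| * |B.indicator f ω| := abs_mul _ _
      _ ≤ 1 * |B.indicator f ω| := by
          apply mul_le_mul_of_nonneg_right _ (abs_nonneg _)
          rw [abs_of_nonneg ((hPs P hP).1 ω)]
          exact hPω P hP ω
      _ = |B.indicator f ω| := one_mul _
  set A := (fun P => expct P (B.indicator f)) '' Ps with hA
  set C := (fun P => expct (condB P B) f) '' Ps with hC
  have hAne : A.Nonempty := hPsne.image _
  have hCne : C.Nonempty := hPsne.image _
  have hAbdd : BddAbove A := by
    refine ⟨K, ?_⟩
    rintro _ ⟨P, hP, rfl⟩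
    exact haK P hP
  have hCbdd : BddAbove C := by
    refine ⟨K / ε, ?_⟩
    rintro _ ⟨P, hP, rfl⟩
    show expct (condB P B) f ≤ K / ε
    rw [expct_cond_eq]
    rcases le_or_gt 0 (expct P (B.indicator f)) with h | h
    · calc expct P (B.indicator f) / probOf P B ≤ expct P (B.indicator f) / ε :=
          div_le_div_of_nonneg_left h hεpos (hεle P hP)
        _ ≤ K / ε := by
          gcongr
          exact haK P hP
      -- note: names may differ; fixed below if needed
    · have hp : 0 < probOf P B := lt_of_lt_of_le hεpos (hεle P hP)
      have : expct P (B.indicator f) / probOf P B ≤ 0 := div_nonpos_of_nonpos_of_nonneg h.le hp.le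
      exact this.trans (div_nonneg hK0 hεpos.le)
  rw [sup_zero_iff A hAne hAbdd, sup_zero_iff C hCne hCbdd]
  constructor
  · rintro ⟨hle, hge⟩
    constructor
    · rintro _ ⟨P, hP, rfl⟩
      show expct (condB P B) f ≤ 0
      rw [expct_cond_eq]
      have hp : 0 < probOf P B := lt_of_lt_of_le hεpos (hεle P hP)
      exact div_nonpos_of_nonpos_of_nonneg (hle _ ⟨P, hP, rfl⟩) hp.le
    · intro δ hδ
      obtain ⟨_, ⟨P, hP, rfl⟩, hx⟩ := hge (δ * ε) (mul_pos hδ hεpos)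
      simp only at hx
      refine ⟨_, ⟨P, hP, rfl⟩, ?_⟩
      show -δ < expct (condB P B) f
      rw [expct_cond_eq]
      have hp : 0 < probOf P B := lt_of_lt_of_le hεpos (hεle P hP)
      rw [lt_div_iff₀ hp]
      calc -δ * probOf P B ≤ -δ * ε := by
            have : -δ < 0 := by linarith
            nlinarith [hεle P hP]
        _ = -(δ * ε) := by ring
        _ < expct P (B.indicator f) := hx
  · rintro ⟨hle, hge⟩
    constructor
    · rintro _ ⟨P, hP, rfl⟩
      have hp : 0 < probOf P B := lt_of_lt_of_le hεpos (hεle P hP)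
      have h := hle _ ⟨P, hP, rfl⟩
      simp only at h
      rw [expct_cond_eq] at h
      show expct P (B.indicator f) ≤ 0
      by_contra hc
      push_neg at hc
      have := div_pos hc hp
      linarith
    · intro δ hδ
      obtain ⟨_, ⟨P, hP, rfl⟩, hx⟩ := hge δ hδ
      simp only at hx
      rw [expct_cond_eq] at hx
      refine ⟨_, ⟨P, hP, rfl⟩, ?_⟩
      have hp : 0 < probOf P B := lt_of_lt_of_le hεpos (hεle P hP)
      rw [lt_div_iff₀ hp] at hx
      calc -δ ≤ -δ * probOf P B := by nlinarith [hPle1 P hP]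
        _ < expct P (B.indicator f) := hx
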